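/- For every λ ∈ [0,1], G(λ) := λ(1−λ) + (e^{λ−1} − λ)·ln(1 − λ·e^{1−λ}) ≥ 0, with the convention that at λ = 1 the second term is interpreted as 0 (indeed λe^{1−λ} < 1 for λ < 1, and G(1) = 0). -/

import Mathlib

lemma L0 (x : ℝ) (h0 : 0 ≤ x) (h1 : x < 1) :
    Real.log (1 - x) ≤ -x - x^2/2 - x^3/3 := by
  set f : ℝ → ℝ := fun t => -t - t^2/2 - t^3/3 - Real.log (1 - t) with hf
  have hder : ∀ t ∈ Set.Ico (0:ℝ) 1, HasDerivAt f (-1 - t - t^2 + 1/(1-t)) t := by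
    intro t ht
    have h1t : (1:ℝ) - t ≠ 0 := by have := ht.2; intro h; nlinarith
    have hlog : HasDerivAt (fun t : ℝ => Real.log (1 - t)) (-1/(1-t)) t := by
      have : HasDerivAt (fun t : ℝ => 1 - t) (-1) t := by
        simpa using (hasDerivAt_id t).const_sub 1
      simpa using this.log h1t
    have hp : HasDerivAt (fun t : ℝ => -t - t^2/2 - t^3/3) (-1 - t - t^2) t := by
      have h1' : HasDerivAt (fun t : ℝ => -t) (-1) t := (hasDerivAt_id t).neg
      have h2' : HasDerivAt (fun t : ℝ => t^2/2) t t := by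
        simpa using (hasDerivAt_pow 2 t).div_const 2
      have h3' : HasDerivAt (fun t : ℝ => t^3/3) (t^2) t := by
        have := (hasDerivAt_pow 3 t).div_const 3
        refine this.congr_deriv ?_; push_cast; ring
      have := (h1'.sub h2').sub h3'
      refine this.congr_deriv ?_; try ring
    have := hp.sub hlog
    refine this.congr_deriv ?_; try ring
  have hmono : MonotoneOn f (Set.Ico (0:ℝ) 1) := by
    apply monotoneOn_of_deriv_nonneg (convex_Ico 0 1)
    · intro t ht; exact (hder t ht).continuousAt.continuousWithinAt
    · rw [interior_Ico]; intro t ht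
      exact (hder t (Set.mem_Ico.mpr ⟨le_of_lt ht.1, ht.2⟩)).differentiableAt.differentiableWithinAt
    · rw [interior_Ico]; intro t ht
      rw [(hder t (Set.mem_Ico.mpr ⟨le_of_lt ht.1, ht.2⟩)).deriv]
      have h1t : (0:ℝ) < 1 - t := by linarith [ht.2]
      have hkey : 1 + t + t^2 ≤ 1/(1-t) := by
        rw [le_div_iff₀ h1t]; nlinarith [ht.1.le]
      linarith
  have := hmono (Set.mem_Ico.mpr ⟨le_refl 0, one_pos⟩) (Set.mem_Ico.mpr ⟨h0, h1⟩) h0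
  simp [hf] at this
  linarith

lemma L1 (x : ℝ) (h0 : 0 ≤ x) (h1 : x < 1) :
    -x + x^2/2 + x^3/6 + x^4/12 ≤ (1-x) * Real.log (1-x) := by
  set g : ℝ → ℝ := fun t => (1-t) * Real.log (1-t) + t - t^2/2 - t^3/6 - t^4/12 with hg
  have hder : ∀ t ∈ Set.Ico (0:ℝ) 1,
      HasDerivAt g (-Real.log (1-t) - t - t^2/2 - t^3/3) t := by
    intro t ht
    have h1t : (1:ℝ) - t ≠ 0 := by have := ht.2; intro h; nlinarith
    have hone : HasDerivAt (fun t : ℝ => 1 - t) (-1) t := by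
      simpa using (hasDerivAt_id t).const_sub 1
    have hlog : HasDerivAt (fun t : ℝ => Real.log (1 - t)) (-1/(1-t)) t := by
      simpa using hone.log h1t
    have hprod : HasDerivAt (fun t : ℝ => (1-t) * Real.log (1-t))
        (-Real.log (1-t) - 1) t := by
      have := hone.mul hlog
      refine this.congr_deriv ?_
      field_simp; ring
    have hp : HasDerivAt (fun t : ℝ => t - t^2/2 - t^3/6 - t^4/12)
        (1 - t - t^2/2 - t^3/3) t := by
      have h1' : HasDerivAt (fun t : ℝ => t) 1 t := hasDerivAt_id t
      have h2' : HasDerivAt (fun t : ℝ => t^2/2) t t := by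
        simpa using (hasDerivAt_pow 2 t).div_const 2
      have h3' : HasDerivAt (fun t : ℝ => t^3/6) (t^2/2) t := by
        have := (hasDerivAt_pow 3 t).div_const 6
        refine this.congr_deriv ?_; push_cast; ring
      have h4' : HasDerivAt (fun t : ℝ => t^4/12) (t^3/3) t := by
        have := (hasDerivAt_pow 4 t).div_const 12
        refine this.congr_deriv ?_; push_cast; ring
      have := ((h1'.sub h2').sub h3').sub h4'
      refine this.congr_deriv ?_; try ring
    have := hprod.add hp
    have heq : g = fun t : ℝ => (1-t) * Real.log (1-t) + (t - t^2/2 - t^3/6 - t^4/12) := by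
      ext s; simp [hg]; ring
    rw [heq]
    refine this.congr_deriv ?_; try ring
  have hmono : MonotoneOn g (Set.Ico (0:ℝ) 1) := by
    apply monotoneOn_of_deriv_nonneg (convex_Ico 0 1)
    · intro t ht; exact (hder t ht).continuousAt.continuousWithinAt
    · rw [interior_Ico]; intro t ht
      exact (hder t (Set.mem_Ico.mpr ⟨le_of_lt ht.1, ht.2⟩)).differentiableAt.differentiableWithinAt
    · rw [interior_Ico]; intro t ht
      rw [(hder t (Set.mem_Ico.mpr ⟨le_of_lt ht.1, ht.2⟩)).deriv]
      have := L0 t (le_of_lt ht.1) ht.2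
      linarith
  have := hmono (Set.mem_Ico.mpr ⟨le_refl 0, one_pos⟩) (Set.mem_Ico.mpr ⟨h0, h1⟩) h0
  simp [hg] at this
  linarith


lemma expub (u : ℝ) (h0 : 0 ≤ u) (h1 : u ≤ 1) :
    Real.exp u ≤ 1 + u + u^2/2 + u^3/6 + 5*u^4/96 := by
  have h := Real.exp_bound (x := u) (by rw [abs_of_nonneg h0]; exact h1) (n := 4) (by norm_num)
  rw [abs_of_nonneg h0] at h
  have hs : ∑ m ∈ Finset.range 4, u ^ m / (m.factorial : ℝ)
      = 1 + u + u^2/2 + u^3/6 := by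
    simp [Finset.sum_range_succ, Nat.factorial]
  rw [hs] at h
  have := abs_le.mp h
  norm_num [Nat.factorial] at this ⊢
  nlinarith [this.2]

set_option maxHeartbeats 2000000 in
theorem stmt_3 (l : ℝ) (hl : l ∈ Set.Icc (0 : ℝ) 1) :
    l * (1 - l) + (Real.exp (l - 1) - l) * Real.log (1 - l * Real.exp (1 - l)) ≥ 0 := by
  obtain ⟨hl0, hl1⟩ := hl
  rcases eq_or_lt_of_le hl1 with h1 | h1
  · rw [h1]; norm_num
  set E := Real.exp (1 - l) with hE
  set c := Real.exp (l - 1) with hc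
  have hEpos : 0 < E := Real.exp_pos _
  have hcpos : 0 < c := Real.exp_pos _
  have hinv : c * E = 1 := by
    rw [hc, hE, ← Real.exp_add]; norm_num
  by_cases hcase : l ≤ 3/5
  · -- Regime A
    have hlt : l < c := by
      have hne : l - 1 ≠ 0 := by intro h; rw [sub_eq_zero] at h; linarith
      have := Real.add_one_lt_exp hne
      rw [← hc] at this; linarith
    have hA1 : l * E < 1 := by
      calc l * E < c * E := mul_lt_mul_of_pos_right hlt hEpos
      _ = 1 := hinv
    have hA0 : 0 ≤ l * E := mul_nonneg hl0 hEpos.le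
    have key := L1 (l*E) hA0 hA1
    have hco : c - l = c * (1 - l*E) := by linear_combination l * hinv
    have hterm : (c - l) * Real.log (1 - l*E)
        ≥ c * (-(l*E) + (l*E)^2/2 + (l*E)^3/6 + (l*E)^4/12) := by
      rw [hco, mul_assoc]
      exact mul_le_mul_of_nonneg_left key hcpos.le
    have hred : c * (-(l*E) + (l*E)^2/2 + (l*E)^3/6 + (l*E)^4/12)
        = -l + l^2*E/2 + l^3*E^2/6 + l^4*E^3/12 := by
      linear_combination (-l + l^2*E/2 + l^3*E^2/6 + l^4*E^3/12) * hinv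
    rw [hred] at hterm
    have hE2 : 2.5 - 2*l + l^2/2 ≤ E := by
      have h := Real.quadratic_le_exp_of_nonneg (x := 1 - l) (by linarith)
      rw [← hE] at h; nlinarith
    obtain ⟨Q, hQdef⟩ : ∃ Q : ℝ, Q = 2.5 - 2*l + l^2/2 := ⟨_, rfl⟩
    rw [← hQdef] at hE2
    have hQ : 0 < Q := by rw [hQdef]; nlinarith
    have hmon : l^2*Q/2 + l^3*Q^2/6 + l^4*Q^3/12 ≤ l^2*E/2 + l^3*E^2/6 + l^4*E^3/12 := by
      have hd : 0 ≤ E - Q := by linarith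
      nlinarith [mul_nonneg (sq_nonneg l) hd,
        mul_nonneg (mul_nonneg (pow_nonneg hl0 3) hd) (by positivity : (0:ℝ) ≤ E + Q),
        mul_nonneg (mul_nonneg (pow_nonneg hl0 4) hd) (by positivity : (0:ℝ) ≤ E^2 + E*Q + Q^2)]
    have hpoly : l^2 ≤ l^2*Q/2 + l^3*Q^2/6 + l^4*Q^3/12 := by
      have hbr : 0 ≤ Q/2 - 1 + l*Q^2/6 + l^2*Q^3/12 := by
        rw [hQdef]
        nlinarith [sq_nonneg (l - 3/5), sq_nonneg l, mul_nonneg hl0 (sub_nonneg.mpr hcase),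
          mul_nonneg (mul_nonneg hl0 hl0) (sub_nonneg.mpr hcase),
          mul_nonneg (mul_nonneg (mul_nonneg hl0 hl0) hl0) (sub_nonneg.mpr hcase),
          pow_nonneg hl0 3, pow_nonneg hl0 4, pow_nonneg hl0 5, pow_nonneg hl0 6,
          mul_nonneg (pow_nonneg hl0 4) (sub_nonneg.mpr hcase),
          mul_nonneg (pow_nonneg hl0 5) (sub_nonneg.mpr hcase)]
      nlinarith [mul_nonneg (sq_nonneg l) hbr]
    linarith
  · -- Regime B
    push_neg at hcase
    obtain ⟨u, hu⟩ : ∃ u : ℝ, u = 1 - l := ⟨_, rfl⟩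
    have hu0 : 0 < u := by rw [hu]; linarith
    have hu4 : u ≤ 2/5 := by rw [hu]; linarith
    have hEu : E = Real.exp u := by rw [hE, hu]
    have hub := expub u hu0.le (by linarith)
    rw [← hEu] at hub
    have hgap : u^2/2 ≤ 1 - l * E := by
      have hl' : l = 1 - u := by rw [hu]; ring
      have hmul : (1-u)*E ≤ (1-u)*(1 + u + u^2/2 + u^3/6 + 5*u^4/96) :=
        mul_le_mul_of_nonneg_left hub (by linarith)
      have hpoly : (1-u)*(1 + u + u^2/2 + u^3/6 + 5*u^4/96) ≤ 1 - u^2/2 := by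
        nlinarith [pow_nonneg hu0.le 3, pow_nonneg hu0.le 4, pow_nonneg hu0.le 5]
      rw [hl']
      linarith
    have hgap0 : (0:ℝ) < u^2/2 := by positivity
    have hclow : 0 ≤ c - l := by
      have := Real.add_one_le_exp (l - 1)
      rw [← hc] at this; linarith
    have hchigh : c - l ≤ u^2/2 := by
      have hq := Real.quadratic_le_exp_of_nonneg hu0.le
      rw [← hEu] at hq
      have h2 : c ≤ 1 - u + u^2/2 := by
        nlinarith [hinv, hEpos, hcpos, hq, sq_nonneg (u^2)]
      have : l = 1 - u := by rw [hu]; ring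
      rw [this]; linarith
    set r := Real.sqrt (Real.sqrt u) with hr
    have hrpos : 0 < r := by
      rw [hr, Real.sqrt_pos]; exact Real.sqrt_pos.mpr hu0
    have hr4 : r^4 = u := by
      rw [hr, show (4:ℕ) = 2*2 from rfl, pow_mul, Real.sq_sqrt (Real.sqrt_nonneg u),
        Real.sq_sqrt hu0.le]
    have hlogu : Real.log u = 4 * Real.log r := by
      rw [← hr4, Real.log_pow]; norm_num
    have hlogr : -Real.log r ≤ 1/r - 1 := by
      have := Real.log_le_sub_one_of_pos (show (0:ℝ) < 1/r by positivity)
      rw [Real.log_div one_ne_zero (ne_of_gt hrpos), Real.log_one] at this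
      linarith
    have hlog2 : Real.log 2 ≤ 0.6931471808 := Real.log_two_lt_d9.le
    have hloglb : Real.log (1 - l*E) ≥ 2 * Real.log u - Real.log 2 := by
      have h := Real.log_le_log hgap0 hgap
      have heq : Real.log (u^2/2) = 2 * Real.log u - Real.log 2 := by
        rw [Real.log_div (by positivity) (by norm_num), Real.log_pow]; norm_num
      linarith [heq.symm.le]
    have hlognp : Real.log (1 - l*E) ≤ 0 := by
      apply Real.log_nonpos
      · nlinarith [mul_nonneg hl0 hEpos.le]
      · nlinarith [mul_nonneg hl0 hEpos.le]
    have hstep1 : (c - l) * Real.log (1 - l*E) ≥ (u^2/2) * Real.log (1 - l*E) := by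
      nlinarith [mul_nonneg (sub_nonneg.mpr hchigh) (neg_nonneg.mpr hlognp)]
    have hstep2 : (u^2/2) * Real.log (1 - l*E) ≥ (u^2/2) * (2 * Real.log u - Real.log 2) :=
      mul_le_mul_of_nonneg_left hloglb (by positivity)
    have hstep3 : (u^2/2) * (2 * Real.log u - Real.log 2)
        ≥ (u^2/2) * (-8*(1/r - 1) - 0.6931471808) := by
      apply mul_le_mul_of_nonneg_left _ (by positivity)
      nlinarith [hlogr, hlog2, hlogu]
    have hr08 : r ≤ 0.8 := by
      by_contra hcon
      push_neg at hcon
      have h4 : (0.8:ℝ)^4 < r^4 := by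
        apply pow_lt_pow_left₀ hcon (by norm_num) (by norm_num)
      rw [hr4] at h4
      norm_num at h4
      linarith
    have hfin : l * u + (u^2/2) * (-8*(1/r - 1) - 0.6931471808) ≥ 0 := by
      have hl' : l = 1 - u := by rw [hu]; ring
      rw [hl', ← hr4]
      have expand : (1 - r^4) * r^4 + ((r^4)^2/2) * (-8*(1/r - 1) - 0.6931471808)
          = r^4 * (1 - 4*r^3 + (3 - 0.6931471808/2)*r^4) := by
        field_simp
        ring
      rw [expand]
      have hp : (0:ℝ) ≤ 1 - 4*r^3 + (3 - 0.6931471808/2)*r^4 := by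
        nlinarith [hr08, hrpos.le, pow_nonneg hrpos.le 3, pow_nonneg hrpos.le 2,
          mul_nonneg (pow_nonneg hrpos.le 3) (sub_nonneg.mpr hr08),
          mul_nonneg (pow_nonneg hrpos.le 2) (sub_nonneg.mpr hr08),
          sq_nonneg (r - 0.8)]
      positivity
    have hlu : l * (1 - l) = l * u := by rw [hu]
    rw [hlu]
    linarith [hstep1, hstep2, hstep3, hfin]
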